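/- For m ≥ 2, the sum over all partitions {I_1,…,I_σ} of {1,…,m} into σ nonempty blocks with 1 ∈ I_1 of the product ∏_{j=1}^{σ} (∑_{i∈I_j} l_i)^{|I_j|−1} equals C(m−1, σ−1) · l^{m−σ}, where l = l_1 + ⋯ + l_m and 2 ≤ σ ≤ m, for any positive reals l_1,…,l_m. -/

import Mathlib

open Finset

namespace Stmt4Aux

variable {ι : Type*} [DecidableEq ι] (l : ι → ℝ)

/-- Sum of weights over a finset. -/
noncomputable def ws (A : Finset ι) : ℝ := ∑ i ∈ A, l i

/-- The "tree polynomial" `y (y + s_C)^(|C|-1)` with convention `1` on `∅`. -/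
noncomputable def psi (y : ℝ) (C : Finset ι) : ℝ :=
  if C = ∅ then 1 else y * (y + ws l C) ^ (C.card - 1)

lemma ws_add_erase {x : ι} {C : Finset ι} (hx : x ∈ C) :
    l x + ws l (C.erase x) = ws l C := by
  simp [ws, Finset.add_sum_erase _ _ hx]

lemma psi_deriv (C : Finset ι) (y : ℝ) :
    HasDerivAt (fun y => psi l y C) (∑ z ∈ C, psi l (y + l z) (C.erase z)) y := by
  rcases eq_or_ne C ∅ with rfl | h
  · simpa [psi] using hasDerivAt_const y (1 : ℝ)
  · have hcard : 1 ≤ C.card := Finset.card_pos.2 (nonempty_iff_ne_empty.2 h)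
    simp only [psi, if_neg h]
    have hd : HasDerivAt (fun y : ℝ => y * (y + ws l C) ^ (C.card - 1))
        (1 * (y + ws l C) ^ (C.card - 1) +
          y * (((C.card - 1 : ℕ) : ℝ) * (y + ws l C) ^ (C.card - 1 - 1) * 1)) y :=
      (hasDerivAt_id y).mul (((hasDerivAt_id y).add_const _).pow _)
    convert hd using 1
    have h2 : C.card = 1 ∨ 2 ≤ C.card := by omega
    rcases h2 with h1 | h2
    · obtain ⟨z, rfl⟩ := Finset.card_eq_one.1 h1
      simp [psi]
    · have key : ∀ z ∈ C, (if C.erase z = ∅ then (1:ℝ) else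
            (y + l z) * (y + l z + ws l (C.erase z)) ^ ((C.erase z).card - 1))
          = (y + l z) * (y + ws l C) ^ (C.card - 2) := by
        intro z hz
        have hne : C.erase z ≠ ∅ := by
          rw [← Finset.nonempty_iff_ne_empty, ← Finset.card_pos, Finset.card_erase_of_mem hz]
          omega
        rw [if_neg hne, Finset.card_erase_of_mem hz]
        have e : C.card - 1 - 1 = C.card - 2 := by omega
        rw [e, add_assoc, ws_add_erase l hz]
      rw [Finset.sum_congr rfl key, ← Finset.sum_mul, Finset.sum_add_distrib,
        Finset.sum_const, nsmul_eq_mul]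
      have e2 : C.card - 1 - 1 = C.card - 2 := by omega
      rw [e2]
      have e3 : ((C.card - 1 : ℕ) : ℝ) = (C.card : ℝ) - 1 := by
        rw [Nat.cast_sub hcard]; norm_num
      rw [e3]
      have e1 : C.card - 1 = (C.card - 2) + 1 := by omega
      rw [e1, pow_succ]
      simp only [ws]
      ring

lemma hur : ∀ (n : ℕ) (T : Finset ι), T.card ≤ n → ∀ (x y : ℝ),
    ∑ A ∈ T.powerset, (x + ws l A) ^ A.card * psi l y (T \ A)
      = (x + y + ws l T) ^ T.card := by
  intro n
  induction n with
  | zero =>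
    intro T hT x y
    have hT0 : T = ∅ := Finset.card_eq_zero.1 (Nat.le_zero.1 hT)
    subst hT0
    simp [psi, ws]
  | succ n ih =>
    intro T hT x y
    rcases eq_or_ne T ∅ with rfl | hTne
    · simp [psi, ws]
    · have hTc : 1 ≤ T.card := Finset.card_pos.2 (nonempty_iff_ne_empty.2 hTne)
      set f : ℝ → ℝ := fun y => ∑ A ∈ T.powerset,
        (x + ws l A) ^ A.card * psi l y (T \ A) with hf
      set g : ℝ → ℝ := fun y => (x + y + ws l T) ^ T.card with hg
      have hder : ∀ y : ℝ, HasDerivAt (fun y => f y - g y) 0 y := by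
        intro y
        have hF : HasDerivAt f (∑ A ∈ T.powerset, (x + ws l A) ^ A.card *
            (∑ z ∈ (T \ A), psi l (y + l z) ((T \ A).erase z))) y := by
          rw [hf]
          apply HasDerivAt.fun_sum
          intro A _
          exact (psi_deriv l (T \ A) y).const_mul _
        have hval : (∑ A ∈ T.powerset, (x + ws l A) ^ A.card *
            (∑ z ∈ (T \ A), psi l (y + l z) ((T \ A).erase z)))
            = (T.card : ℝ) * (x + y + ws l T) ^ (T.card - 1) := by
          have step1 : ∀ A ∈ T.powerset, (x + ws l A) ^ A.card *
              (∑ z ∈ (T \ A), psi l (y + l z) ((T \ A).erase z))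
              = ∑ z ∈ (T \ A), (x + ws l A) ^ A.card
                  * psi l (y + l z) ((T.erase z) \ A) := by
            intro A _
            rw [Finset.mul_sum]
            refine Finset.sum_congr rfl fun z _ => ?_
            have : (T \ A).erase z = (T.erase z) \ A := by
              ext v
              simp only [Finset.mem_erase, Finset.mem_sdiff]
              tauto
            rw [this]
          rw [Finset.sum_congr rfl step1]
          rw [Finset.sum_comm' (s := T.powerset) (t := fun A => T \ A) (t' := T)
             (s' := fun z => (T.erase z).powerset)
             (fun A z => by
                simp only [Finset.mem_sdiff, Finset.mem_powerset, Finset.subset_erase]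
                tauto)]
          have inner : ∀ z ∈ T, (∑ A ∈ (T.erase z).powerset,
              (x + ws l A) ^ A.card * psi l (y + l z) ((T.erase z) \ A))
              = (x + y + ws l T) ^ (T.card - 1) := by
            intro z hz
            have hcard' : (T.erase z).card ≤ n := by
              rw [Finset.card_erase_of_mem hz]; omega
            rw [ih (T.erase z) hcard' x (y + l z), Finset.card_erase_of_mem hz]
            congr 1
            rw [← ws_add_erase l hz]
            ring
          rw [Finset.sum_congr rfl inner, Finset.sum_const, nsmul_eq_mul]
        rw [hval] at hF
        have hG : HasDerivAt g ((T.card : ℝ) * (x + y + ws l T) ^ (T.card - 1)) y := by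
          have h1 : HasDerivAt (fun y : ℝ => x + y + ws l T) 1 y := by
            simpa using ((hasDerivAt_id y).const_add x).add_const (ws l T)
          rw [hg]
          have h := h1.pow T.card; rw [mul_one] at h; exact h
        have h := hF.sub hG; rw [sub_self] at h; exact h
      have hconst : f y - g y = f 0 - g 0 :=
        is_const_of_deriv_eq_zero (fun t => (hder t).differentiableAt)
          (fun t => (hder t).deriv) y 0
      have h0 : f 0 = g 0 := by
        have hfz : f 0 = (x + ws l T) ^ T.card := by
          rw [hf]
          simp only []
          rw [Finset.sum_eq_single_of_mem T (Finset.mem_powerset_self T)]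
          · simp [psi]
          · intro A hA hne
            have hsd : T \ A ≠ ∅ := by
              rw [← Finset.nonempty_iff_ne_empty]
              exact Finset.sdiff_nonempty.2
                (fun hsub => hne (Finset.Subset.antisymm (Finset.mem_powerset.1 hA) hsub))
            simp [psi, hsd]
        rw [hfz, hg]
        norm_num
      have : f y = g y := by
        have := hconst
        rw [h0] at this
        linarith
      simpa [hf, hg] using this


/-- Unordered partitions of `S` into nonempty pairwise-disjoint blocks (any number). -/
def parts (S : Finset ι) : Finset (Finset (Finset ι)) :=
  S.powerset.powerset.filter fun P =>
    (∀ B ∈ P, B ≠ ∅) ∧ (∀ B ∈ P, ∀ B' ∈ P, B ≠ B' → Disjoint B B') ∧ P.sup id = S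

lemma mem_parts {S : Finset ι} {P : Finset (Finset ι)} :
    P ∈ parts S ↔ (∀ B ∈ P, B ≠ ∅) ∧
      (∀ B ∈ P, ∀ B' ∈ P, B ≠ B' → Disjoint B B') ∧ P.sup id = S := by
  simp only [parts, Finset.mem_filter, Finset.mem_powerset]
  constructor
  · tauto
  · intro h
    refine ⟨fun B hB => Finset.mem_powerset.2 ?_, h⟩
    exact h.2.2 ▸ Finset.le_sup (f := id) hB

lemma parts_empty : parts (∅ : Finset ι) = {∅} := by
  ext P
  simp only [Finset.mem_singleton, mem_parts]
  constructor
  · rintro ⟨h1, _, h3⟩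
    rw [Finset.eq_empty_iff_forall_notMem]
    intro B hB
    exact h1 B hB (Finset.subset_empty.1 (h3 ▸ Finset.le_sup (f := id) hB))
  · rintro rfl
    simp

/-- Generating sum over all partitions. -/
noncomputable def Phi (y : ℝ) (S : Finset ι) : ℝ :=
  ∑ P ∈ parts S, y ^ P.card * ∏ B ∈ P, (ws l B) ^ (B.card - 1)

lemma block_exists {S : Finset ι} {P : Finset (Finset ι)} (hP : P ∈ parts S)
    {x : ι} (hx : x ∈ S) :
    ∃ B, B ∈ P ∧ x ∈ B ∧ P.filter (fun B => x ∈ B) = {B} := by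
  obtain ⟨h1, h2, h3⟩ := mem_parts.1 hP
  have : x ∈ P.sup id := h3 ▸ hx
  obtain ⟨B, hBP, hxB⟩ := Finset.mem_sup.1 this
  refine ⟨B, hBP, hxB, ?_⟩
  ext B'
  simp only [Finset.mem_filter, Finset.mem_singleton]
  constructor
  · rintro ⟨hB'P, hxB'⟩
    by_contra hne
    exact Finset.disjoint_left.1 (h2 B' hB'P B hBP hne) hxB' hxB
  · rintro rfl
    exact ⟨hBP, hxB⟩

lemma phi_rec (S : Finset ι) (x : ι) (hx : x ∈ S) (y : ℝ) :
    Phi l y S = y * ∑ A ∈ (S.erase x).powerset,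
      (l x + ws l A) ^ A.card * Phi l y ((S.erase x) \ A) := by
  classical
  set T := S.erase x with hT
  set blk : Finset (Finset ι) → Finset ι :=
    fun P => ((P.filter fun B => x ∈ B).sup id).erase x with hblkdef
  have hxT : x ∉ T := Finset.notMem_erase x S
  -- blk of a partition
  have blk_eq : ∀ P ∈ parts S, ∀ B, B ∈ P → x ∈ B → P.filter (fun B => x ∈ B) = {B} →
      blk P = B.erase x := by
    intro P _ B _ _ hfil
    rw [hblkdef]
    simp [hfil]
  have maps : ∀ P ∈ parts S, blk P ∈ T.powerset := by
    intro P hP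
    obtain ⟨B, hBP, hxB, hfil⟩ := block_exists hP hx
    rw [blk_eq P hP B hBP hxB hfil]
    have hBS : B ⊆ S := by
      have := (mem_parts.1 hP).2.2
      exact this ▸ Finset.le_sup (f := id) hBP
    exact Finset.mem_powerset.2 (Finset.erase_subset_erase x hBS)
  rw [Phi, ← Finset.sum_fiberwise_of_maps_to maps]
  have main : ∀ A ∈ T.powerset,
      (∑ P ∈ (parts S).filter (fun P => blk P = A),
        y ^ P.card * ∏ B ∈ P, (ws l B) ^ (B.card - 1))
      = (l x + ws l A) ^ A.card * (y * Phi l y (T \ A)) := by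
    intro A hA
    have hAT : A ⊆ T := Finset.mem_powerset.1 hA
    have hxA : x ∉ A := fun h => hxT (hAT h)
    set Bx := insert x A with hBx
    have hBxA : Bx.erase x = A := Finset.erase_insert hxA
    have hBxcard : Bx.card = A.card + 1 := Finset.card_insert_of_notMem hxA
    have hwsBx : ws l Bx = l x + ws l A := by rw [ws, ws, Finset.sum_insert hxA]
    have hBxne : Bx ≠ ∅ := Finset.insert_ne_empty x A
    have hxBx : x ∈ Bx := Finset.mem_insert_self x A
    have hsplit : S \ Bx = T \ A := by
      ext v
      simp only [Finset.mem_sdiff, hT, Finset.mem_erase, hBx, Finset.mem_insert]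
      tauto
    have hxTA : x ∉ T \ A := fun h => hxT (Finset.mem_sdiff.1 h).1
    have hQsub : ∀ Q ∈ parts (T \ A), ∀ B ∈ Q, B ⊆ T \ A := by
      intro Q hQ B hB
      have := (mem_parts.1 hQ).2.2
      exact this ▸ Finset.le_sup (f := id) hB
    -- the bijection
    rw [Finset.sum_nbij' (i := fun P => P.erase Bx) (j := fun Q => insert Bx Q)
      (t := parts (T \ A))
      (g := fun Q => (l x + ws l A) ^ A.card *
        (y * (y ^ Q.card * ∏ B ∈ Q, (ws l B) ^ (B.card - 1))))
      ?hi ?hj ?hleft ?hright ?hval]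
    · rw [Phi, ← Finset.mul_sum, ← Finset.mul_sum]
    case hi =>
      intro P hP0
      obtain ⟨hP, hblkP⟩ := Finset.mem_filter.1 hP0
      obtain ⟨B, hBP, hxB, hfil⟩ := block_exists hP hx
      have hBBx : B = Bx := by
        rw [hBx, ← hblkP, blk_eq P hP B hBP hxB hfil, Finset.insert_erase hxB]
      subst hBBx
      obtain ⟨h1, h2, h3⟩ := mem_parts.1 hP
      refine mem_parts.2 ⟨fun B' hB' => h1 B' (Finset.mem_of_mem_erase hB'), ?_, ?_⟩
      · intro B' hB' B'' hB'' hne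
        exact h2 B' (Finset.mem_of_mem_erase hB') B'' (Finset.mem_of_mem_erase hB'') hne
      · rw [← hsplit]
        apply le_antisymm
        · apply Finset.sup_le
          intro B' hB'
          obtain ⟨hne, hB'P⟩ := Finset.mem_erase.1 hB'
          show B' ⊆ S \ Bx
          rw [Finset.subset_sdiff]
          exact ⟨h3 ▸ Finset.le_sup (f := id) hB'P, h2 B' hB'P Bx hBP hne⟩
        · intro v hv
          obtain ⟨hvS, hvBx⟩ := Finset.mem_sdiff.1 hv
          obtain ⟨B', hB'P, hvB'⟩ := Finset.mem_sup.1 (h3 ▸ hvS : v ∈ P.sup id)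
          have : B' ≠ Bx := fun h => hvBx (h ▸ hvB')
          exact Finset.mem_sup.2 ⟨B', Finset.mem_erase.2 ⟨this, hB'P⟩, hvB'⟩
    case hj =>
      intro Q hQ
      obtain ⟨h1, h2, h3⟩ := mem_parts.1 hQ
      have hBxQ : Bx ∉ Q := fun h => hxTA (hQsub Q hQ Bx h hxBx)
      have hdisjBx : ∀ B ∈ Q, Disjoint Bx B := by
        intro B hB
        rw [Finset.disjoint_left]
        intro v hvBx hvB
        have hvTA : v ∈ T \ A := hQsub Q hQ B hB hvB
        rcases Finset.mem_insert.1 hvBx with rfl | hvA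
        · exact hxTA hvTA
        · exact (Finset.mem_sdiff.1 hvTA).2 hvA
      refine Finset.mem_filter.2 ⟨mem_parts.2 ⟨?_, ?_, ?_⟩, ?_⟩
      · intro B hB
        rcases Finset.mem_insert.1 hB with rfl | hB
        · exact hBxne
        · exact h1 B hB
      · intro B hB B' hB' hne
        rcases Finset.mem_insert.1 hB with rfl | hB <;>
          rcases Finset.mem_insert.1 hB' with rfl | hB'
        · exact absurd rfl hne
        · exact hdisjBx B' hB'
        · exact (hdisjBx B hB).symm
        · exact h2 B hB B' hB' hne
      · rw [Finset.sup_insert, h3]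
        have hAS : ∀ v, v ∈ A → v ∈ S := fun v hv => (Finset.erase_subset x S) (hAT hv)
        have : (Bx : Finset ι) ⊔ (T \ A) = S := by
          ext v
          simp only [Finset.sup_eq_union, Finset.mem_union, hBx, Finset.mem_insert,
            Finset.mem_sdiff, hT, Finset.mem_erase]
          constructor
          · intro h
            rcases h with (rfl | hvA) | ⟨⟨_, hvT⟩, _⟩
            · exact hx
            · exact hAS v hvA
            · exact hvT
          · intro hvS
            by_cases hvx : v = x
            · exact Or.inl (Or.inl hvx)
            · by_cases hvA : v ∈ A
              · exact Or.inl (Or.inr hvA)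
              · exact Or.inr ⟨⟨hvx, hvS⟩, hvA⟩
        exact this
      · -- blk (insert Bx Q) = A
        have hfil : (insert Bx Q).filter (fun B => x ∈ B) = {Bx} := by
          ext B
          simp only [Finset.mem_filter, Finset.mem_insert, Finset.mem_singleton]
          constructor
          · rintro ⟨rfl | hBQ, hxB⟩
            · rfl
            · exact (hxTA ((hQsub Q hQ B hBQ) hxB)).elim
          · rintro rfl
            exact ⟨Or.inl rfl, hxBx⟩
        rw [hblkdef]
        simp only [hfil, Finset.sup_singleton, id]
        exact hBxA
    case hleft =>
      intro P hP0
      obtain ⟨hP, hblkP⟩ := Finset.mem_filter.1 hP0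
      obtain ⟨B, hBP, hxB, hfil⟩ := block_exists hP hx
      have hBBx : B = Bx := by
        rw [hBx, ← hblkP, blk_eq P hP B hBP hxB hfil, Finset.insert_erase hxB]
      exact Finset.insert_erase (hBBx ▸ hBP)
    case hright =>
      intro Q hQ
      have hBxQ : Bx ∉ Q := fun h => hxTA (hQsub Q hQ Bx h hxBx)
      exact Finset.erase_insert hBxQ
    case hval =>
      intro P hP0
      obtain ⟨hP, hblkP⟩ := Finset.mem_filter.1 hP0
      obtain ⟨B, hBP, hxB, hfil⟩ := block_exists hP hx
      have hBBx : B = Bx := by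
        rw [hBx, ← hblkP, blk_eq P hP B hBP hxB hfil, Finset.insert_erase hxB]
      subst hBBx
      have hPcard : 1 ≤ P.card := Finset.card_pos.2 ⟨Bx, hBP⟩
      have hprod : ∏ B ∈ P, (ws l B) ^ (B.card - 1)
          = (ws l Bx) ^ (Bx.card - 1) * ∏ B ∈ P.erase Bx, (ws l B) ^ (B.card - 1) :=
        (Finset.mul_prod_erase P _ hBP).symm
      beta_reduce
      rw [hprod, Finset.card_erase_of_mem hBP, hwsBx, hBxcard]
      have : P.card = (P.card - 1) + 1 := by omega
      rw [this, pow_succ]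
      simp only [Nat.add_sub_cancel]
      ring
  rw [Finset.sum_congr rfl main, Finset.mul_sum]
  exact Finset.sum_congr rfl fun A _ => by ring


lemma phi_eq : ∀ (n : ℕ) (S : Finset ι), S.card ≤ n → ∀ y : ℝ,
    Phi l y S = psi l y S := by
  intro n
  induction n with
  | zero =>
    intro S hS y
    have h0 : S = ∅ := Finset.card_eq_zero.1 (Nat.le_zero.1 hS)
    subst h0
    simp [Phi, parts_empty, psi]
  | succ n ih =>
    intro S hS y
    rcases eq_or_ne S ∅ with rfl | hne
    · simp [Phi, parts_empty, psi]
    · obtain ⟨x, hx⟩ := Finset.nonempty_iff_ne_empty.2 hne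
      have hScard : 1 ≤ S.card := Finset.card_pos.2 ⟨x, hx⟩
      rw [phi_rec l S x hx y]
      have step : ∀ A ∈ (S.erase x).powerset,
          (l x + ws l A) ^ A.card * Phi l y ((S.erase x) \ A)
          = (l x + ws l A) ^ A.card * psi l y ((S.erase x) \ A) := by
        intro A _
        congr 1
        apply ih _ _ y
        calc ((S.erase x) \ A).card ≤ (S.erase x).card :=
              Finset.card_le_card Finset.sdiff_subset
          _ ≤ n := by rw [Finset.card_erase_of_mem hx]; omega
      rw [Finset.sum_congr rfl step,
        hur l n (S.erase x) (by rw [Finset.card_erase_of_mem hx]; omega) (l x) y]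
      rw [psi, if_neg hne]
      have hbase : l x + y + ws l (S.erase x) = y + ws l S := by
        rw [← ws_add_erase l hx]; ring
      rw [hbase, Finset.card_erase_of_mem hx]

end Stmt4Aux

/-- The finset of (unordered) partitions of `S` into exactly `σ` nonempty,
pairwise disjoint blocks. -/
def setPartitions (m : ℕ) (S : Finset (Fin m)) (σ : ℕ) :
    Finset (Finset (Finset (Fin m))) :=
  Finset.univ.filter (fun P : Finset (Finset (Fin m)) =>
    P.card = σ ∧ (∀ B ∈ P, B.Nonempty) ∧
      (∀ B ∈ P, ∀ B' ∈ P, B ≠ B' → Disjoint B B') ∧ P.sup id = S)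

theorem stmt_4 (m σ : ℕ) (hm : 2 ≤ m) (hσ2 : 2 ≤ σ) (hσm : σ ≤ m)
    (l : Fin m → ℝ) (hl : ∀ i, 0 < l i) :
    ∑ P ∈ setPartitions m Finset.univ σ,
        ∏ B ∈ P, (∑ i ∈ B, l i) ^ (B.card - 1)
      = ((m - 1).choose (σ - 1) : ℝ) * (∑ i, l i) ^ (m - σ) := by
  classical
  have hm0 : 0 < m := by omega
  haveI : NeZero m := ⟨by omega⟩
  have huniv : (Finset.univ : Finset (Fin m)).card = m := by simp
  have hne : (Finset.univ : Finset (Fin m)) ≠ ∅ := by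
    simp [← Finset.nonempty_iff_ne_empty]
  set L := ∑ i, l i with hL
  have key : ∀ y : ℝ, ∑ P ∈ Stmt4Aux.parts (Finset.univ : Finset (Fin m)),
      y ^ P.card * ∏ B ∈ P, (∑ i ∈ B, l i) ^ (B.card - 1)
      = y * (y + L) ^ (m - 1) := by
    intro y
    have h := Stmt4Aux.phi_eq l m Finset.univ (by simp) y
    rw [Stmt4Aux.Phi, Stmt4Aux.psi, if_neg hne] at h
    have hws : Stmt4Aux.ws l (Finset.univ : Finset (Fin m)) = L := rfl
    rw [hws, huniv] at h
    exact h
  set p : Polynomial ℝ := ∑ P ∈ Stmt4Aux.parts (Finset.univ : Finset (Fin m)),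
    Polynomial.monomial P.card (∏ B ∈ P, (∑ i ∈ B, l i) ^ (B.card - 1)) with hp
  set q : Polynomial ℝ := Polynomial.X * (Polynomial.X + Polynomial.C L) ^ (m - 1) with hq
  have hpq : p = q := by
    apply Polynomial.funext
    intro y
    rw [hp, hq]
    rw [Polynomial.eval_finset_sum]
    simp only [Polynomial.eval_monomial, Polynomial.eval_mul, Polynomial.eval_pow,
      Polynomial.eval_add, Polynomial.eval_X, Polynomial.eval_C]
    rw [← key y]
    exact Finset.sum_congr rfl fun P _ => by ring
  have hcoeffp : p.coeff σ = ∑ P ∈ setPartitions m Finset.univ σ,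
      ∏ B ∈ P, (∑ i ∈ B, l i) ^ (B.card - 1) := by
    rw [hp, Polynomial.finset_sum_coeff]
    rw [Finset.sum_congr rfl (fun P _ => Polynomial.coeff_monomial)]
    rw [← Finset.sum_filter]
    apply Finset.sum_congr _ (fun P _ => rfl)
    ext P
    simp only [Finset.mem_filter, Stmt4Aux.mem_parts, setPartitions,
      Finset.mem_univ, true_and, Finset.nonempty_iff_ne_empty]
    tauto
  have hcoeffq : q.coeff σ = L ^ (m - σ) * ((m - 1).choose (σ - 1) : ℝ) := by
    rw [hq]
    have hσ : σ = (σ - 1) + 1 := by omega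
    rw [hσ, Polynomial.coeff_X_mul, Polynomial.coeff_X_add_C_pow]
    have : m - 1 - (σ - 1) = m - σ := by omega
    rw [this]
    have e1 : m - (σ - 1 + 1) = m - σ := by omega
    have e2 : σ - 1 + 1 - 1 = σ - 1 := by omega
    rw [e1, e2]
  rw [← hcoeffp, hpq, hcoeffq]
  ring
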